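/- arXiv:math/0207076 — 2 statements merged into one kernel-verified Lean document; each statement's English description precedes it below -/
import Mathlib

section
/- Let d ≥ 2 and let P(x,s) be a one-parameter family of degree-d polynomials as below. Then the singular locus of the hypersurface Y ⊂ ℙⁿ × ℂ_s × ℂ_t is exactly the set {([x:0], s, t) : ∂P_d/∂x_i(x,s) = 0 for all i = 1,…,n, P_{d−1}(x,s) = 0, ∂P_d/∂s(x,s) = 0, t ∈ ℂ}. In particular Sing Y is contained in Y^∞ = Y ∩ {x₀ = 0}, is a product space by the t-coordinate, and depends only on the degree-d and degree-(d−1) parts of P in x. -/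
open MvPolynomial Filter CategoryTheory Limits Topology

noncomputable section

abbrev XS (n : ℕ) := Fin n ⊕ Unit
abbrev HV (n : ℕ) := Fin n ⊕ Unit
abbrev TV (n : ℕ) := Fin n ⊕ Fin 3

/-- ℙ^{n-1}, the hyperplane at infinity of ℙⁿ. -/
abbrev PrjInf (n : ℕ) := Projectivization ℂ (Fin n → ℂ)
/-- ℙⁿ. -/
abbrev Prj (n : ℕ) := Projectivization ℂ (HV n → ℂ)

/-- weights for the degree in the `x`-variables only: `s` has weight `0`. -/
def wtx (n : ℕ) : XS n → ℕ := Sum.elim (fun _ => 1) (fun _ => 0)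

/-- `P_q`, the degree-`q` homogeneous part of `P` in the variables `x`. -/
def xpart {n : ℕ} (P : MvPolynomial (XS n) ℂ) (q : ℕ) : MvPolynomial (XS n) ℂ :=
  weightedHomogeneousComponent (wtx n) q P

/-- the evaluation point `(x, s)`. -/
def evA {n : ℕ} (x : Fin n → ℂ) (s : ℂ) : XS n → ℂ := Sum.elim x (fun _ => s)

/-- `deg_x P(·,s) = d` at the parameter value `s`. -/
def DegXAt {n : ℕ} (d : ℕ) (P : MvPolynomial (XS n) ℂ) (s : ℂ) : Prop :=
  (∀ q, d < q → ∀ x : Fin n → ℂ, eval (evA x s) (xpart P q) = 0) ∧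
  (∃ x : Fin n → ℂ, eval (evA x s) (xpart P d) ≠ 0)

/-- the substitution embedding the variables `(x,s)` into the variables `(x,x₀,s,t)`. -/
def embT {n : ℕ} : XS n → MvPolynomial (TV n) ℂ :=
  Sum.elim (fun i => X (Sum.inl i)) (fun _ => X (Sum.inr 1))

/-- The defining polynomial `F = P̃(x,x₀,s) - t·x₀^d` of the total space
`Y ⊂ ℙⁿ × ℂ_s × ℂ_t`, where `P̃ = Σ_{q ≤ d} x₀^{d-q} P_q(x,s)` is the homogenization
of `P` in `x` by the variable `x₀`. -/
def FY {n : ℕ} (d : ℕ) (P : MvPolynomial (XS n) ℂ) : MvPolynomial (TV n) ℂ :=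
  (∑ q ∈ Finset.range (d+1), (X (Sum.inr 0))^(d-q) * aeval embT (xpart P q))
    - X (Sum.inr 2) * (X (Sum.inr 0))^d

/-- the evaluation point `((x,x₀), s, t)` of the variables of `FY`. -/
def evT {n : ℕ} (u : HV n → ℂ) (s t : ℂ) : TV n → ℂ :=
  Sum.elim (fun i => u (Sum.inl i)) ![u (Sum.inr ()), s, t]

/-- `([u], s, t) ∈ Y`. -/
def OnY {n : ℕ} (d : ℕ) (P : MvPolynomial (XS n) ℂ) (u : HV n → ℂ) (s t : ℂ) : Prop :=
  eval (evT u s t) (FY d P) = 0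

/-- all partial derivatives of the defining equation of `Y` — with respect to the
homogeneous coordinates `(x, x₀)` and the affine coordinates `s, t` — vanish at
`([u], s, t)`; together with `OnY` this says `([u],s,t)` is a singular point of `Y`. -/
def AllDerivsVanish {n : ℕ} (d : ℕ) (P : MvPolynomial (XS n) ℂ) (u : HV n → ℂ)
    (s t : ℂ) : Prop :=
  ∀ v : TV n, eval (evT u s t) (pderiv v (FY d P)) = 0

/-- the partial derivatives with respect to the homogeneous coordinates `(x, x₀)`
vanish at `([u], s, t)`; together with `OnY` this says `[u]` is a singular point of the
projective fiber `Y_{s,t}`. -/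
def FiberDerivsVanish {n : ℕ} (d : ℕ) (P : MvPolynomial (XS n) ℂ) (u : HV n → ℂ)
    (s t : ℂ) : Prop :=
  (∀ i : Fin n, eval (evT u s t) (pderiv (Sum.inl i) (FY d P)) = 0) ∧
    eval (evT u s t) (pderiv (Sum.inr 0) (FY d P)) = 0

/-- the partial derivatives with respect to `(x, x₀)` and `t` (but not `s`) vanish;
together with `OnY` this identifies the singular points of `Y_{s,ℂ}`, resp. the critical
points of the projection `σ : Y → ℂ_s`. -/
def SliceDerivsVanish {n : ℕ} (d : ℕ) (P : MvPolynomial (XS n) ℂ) (u : HV n → ℂ)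
    (s t : ℂ) : Prop :=
  FiberDerivsVanish d P u s t ∧ eval (evT u s t) (pderiv (Sum.inr 2) (FY d P)) = 0

/-- `[x] ∈ W_s`: all `∂P_d/∂x_i` vanish at `(x,s)`. -/
def WCond {n : ℕ} (d : ℕ) (P : MvPolynomial (XS n) ℂ) (x : Fin n → ℂ) (s : ℂ) : Prop :=
  ∀ i : Fin n, eval (evA x s) (pderiv (Sum.inl i) (xpart P d)) = 0

/-- `[x] ∈ Σ_s`: moreover `P_{d-1}(x,s) = 0`. -/
def SCond {n : ℕ} (d : ℕ) (P : MvPolynomial (XS n) ℂ) (x : Fin n → ℂ) (s : ℂ) : Prop :=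
  WCond d P x s ∧ eval (evA x s) (xpart P (d-1)) = 0

/-- `φ_d(x) = ∂P_d/∂s (x, 0) = 0`. -/
def PhiCond {n : ℕ} (d : ℕ) (P : MvPolynomial (XS n) ℂ) (x : Fin n → ℂ) : Prop :=
  eval (evA x 0) (pderiv (Sum.inr ()) (xpart P d)) = 0

/-- `W_s ⊂ ℙ^{n-1}` as a set of projective points. -/
def Wset {n : ℕ} (d : ℕ) (P : MvPolynomial (XS n) ℂ) (s : ℂ) : Set (PrjInf n) :=
  {p | WCond d P p.rep s}

/-- `Σ_s ⊂ ℙ^{n-1}` as a set of projective points. -/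
def Sigset {n : ℕ} (d : ℕ) (P : MvPolynomial (XS n) ℂ) (s : ℂ) : Set (PrjInf n) :=
  {p | SCond d P p.rep s}

/-- `f_s = P(·,s)` as a polynomial in `x`. -/
def fS {n : ℕ} (P : MvPolynomial (XS n) ℂ) (s : ℂ) : MvPolynomial (Fin n) ℂ :=
  aeval (Sum.elim X (fun _ => C s)) P

/-- `x` is an affine critical point of `f_s`, i.e. `∂P/∂x_i(x,s) = 0` for all `i`. -/
def CritPt {n : ℕ} (P : MvPolynomial (XS n) ℂ) (x : Fin n → ℂ) (s : ℂ) : Prop :=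
  ∀ i : Fin n, eval (evA x s) (pderiv (Sum.inl i) P) = 0

/-- the set of singular points of the compactified fiber `Y_{s,t} ⊂ ℙⁿ`. -/
def SingYst {n : ℕ} (d : ℕ) (P : MvPolynomial (XS n) ℂ) (s t : ℂ) : Set (Prj n) :=
  {p | OnY d P p.rep s t ∧ FiberDerivsVanish d P p.rep s t}

/-- `f₀ = P(·,0)` is a FISI polynomial: it has finitely many critical points, the
projective closure of each of its fibers has only isolated (= finitely many) singular
points, and the singular locus `W₀` of the slice at infinity is finite. -/
def FISIat {n : ℕ} (d : ℕ) (P : MvPolynomial (XS n) ℂ) (s : ℂ) : Prop :=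
  {x : Fin n → ℂ | CritPt P x s}.Finite ∧ (∀ t : ℂ, (SingYst d P s t).Finite) ∧
    (Wset d P s).Finite

/-- `P` is a FISI deformation: `f₀` is FISI, `W₀` is finite and every `f_s`, for `s` in a
neighbourhood of `0`, has only finitely many critical points. -/
def FISIdef {n : ℕ} (d : ℕ) (P : MvPolynomial (XS n) ℂ) : Prop :=
  FISIat d P 0 ∧ ∃ ε > (0:ℝ), ∀ s : ℂ, ‖s‖ < ε → {x : Fin n → ℂ | CritPt P x s}.Finite

/-- The "Milnor-type" local dimension: given polynomial germs `gs` at a point `a ∈ ℂᵐ`,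
this is the `ℂ`-dimension of the formal power series ring at `a` (identified with
`ℂ[[X]]` via `X ↦ X - a`) modulo the ideal generated by the germs. -/
def germDim {m : ℕ} (gs : Set (MvPolynomial (Fin m) ℂ)) (a : Fin m → ℂ) : ℕ :=
  Module.finrank ℂ (MvPowerSeries (Fin m) ℂ ⧸ Ideal.span
    ((fun g => (MvPolynomial.coeToMvPowerSeries.ringHom
        (aeval (fun i => X i + C (a i)) g) : MvPowerSeries (Fin m) ℂ)) '' gs))

/-- the (choice of an) index `j` with `p.rep j ≠ 0`, used to normalize `v_j = 1`
and to work in the chart `x_j = 1` of `ℙⁿ`. -/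
def jp {n : ℕ} (p : PrjInf n) : Fin n :=
  (Function.ne_iff.mp p.rep_nonzero).choose

lemma jp_spec {n : ℕ} (p : PrjInf n) : p.rep (jp p) ≠ 0 :=
  (Function.ne_iff.mp p.rep_nonzero).choose_spec

/-- the chart coordinates of the point at infinity `p = [v:0]`, where `v` is normalized
by `v_{j(p)} = 1`, in the chart `x_{j(p)} = 1` of `ℙⁿ`; the slot `j(p)` of the chart
carries the coordinate `x₀`, which is `0` at `p`. -/
def chartPt {n : ℕ} (p : PrjInf n) : Fin n → ℂ :=
  fun i => if i = jp p then 0 else p.rep i / p.rep (jp p)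

/-- the chart equation of the compactified fiber `Y_{s,t}` in the chart `x_j = 1` of
`ℙⁿ`: substitute `x_j = 1` in the homogeneous defining equation `FY`, the chart slot `j`
carrying the coordinate `x₀`. -/
def chartEq {n : ℕ} (d : ℕ) (P : MvPolynomial (XS n) ℂ) (j : Fin n) (s t : ℂ) :
    MvPolynomial (Fin n) ℂ :=
  aeval (Sum.elim (fun i => if i = j then 1 else X i) ![X j, C s, C t]) (FY d P)

/-- the chart equation of the hypersurface `{P_d(·,s) = 0} ⊂ ℙ^{n-1}` in the chart
`x_j = 1` of `ℙ^{n-1}` (the chart variable `X j` is unused). -/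
def chartEqInf {n : ℕ} (d : ℕ) (P : MvPolynomial (XS n) ℂ) (j : Fin n) (s : ℂ) :
    MvPolynomial (Fin n) ℂ :=
  aeval (fun i => if i = j then 1 else X i) (aeval (Sum.elim X (fun _ => C s)) (xpart P d))

/-- `μ_p(t,s)`, the Milnor number of the isolated singularity of the compactified fiber
`Y_{s,t}` at the point `p` of the hyperplane at infinity. -/
def muP {n : ℕ} (d : ℕ) (P : MvPolynomial (XS n) ℂ) (p : PrjInf n) (s t : ℂ) : ℕ :=
  germDim (Set.range fun i => pderiv i (chartEq d P (jp p) s t)) (chartPt p)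

/-- `μ_{p,gen}(s) = min_{t ∈ ℂ} μ_p(t,s)`. -/
def muGen {n : ℕ} (d : ℕ) (P : MvPolynomial (XS n) ℂ) (p : PrjInf n) (s : ℂ) : ℕ :=
  sInf (Set.range (muP d P p s))

/-- the local Milnor–Lê number `λ_{p,t}(s) = μ_p(t,s) − μ_{p,gen}(s)`. -/
def lamP {n : ℕ} (d : ℕ) (P : MvPolynomial (XS n) ℂ) (p : PrjInf n) (t s : ℂ) : ℕ :=
  muP d P p s t - muGen d P p s

/-- `μ_p^∞(s)`, the Milnor number at `p` of the hypersurface `{P_d(·,s)=0} ⊂ ℙ^{n-1}`: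
computed in the chart `x_{j(p)} = 1`, adding the generator `X (j p)` to kill the unused
chart variable. -/
def muInf {n : ℕ} (d : ℕ) (P : MvPolynomial (XS n) ℂ) (p : PrjInf n) (s : ℂ) : ℕ :=
  germDim ({g | ∃ i, i ≠ jp p ∧ g = pderiv i (chartEqInf d P (jp p) s)} ∪ {X (jp p)})
    (chartPt p)

/-- the total Milnor number `μ(s)` of the affine singularities of `f_s`. -/
def muTot {n : ℕ} (P : MvPolynomial (XS n) ℂ) (s : ℂ) : ℕ :=
  Module.finrank ℂ (MvPolynomial (Fin n) ℂ ⧸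
    Ideal.span (Set.range fun i => pderiv i (fS P s)))

/-- the local Milnor number `μ_a(f_s)` of `f_s` at the point `a ∈ ℂⁿ`. -/
def muAt {n : ℕ} (P : MvPolynomial (XS n) ℂ) (s : ℂ) (a : Fin n → ℂ) : ℕ :=
  germDim (Set.range fun i => pderiv i (fS P s)) a

/-- the total Milnor–Lê number at infinity `λ(s) = Σ_{p ∈ Σ_s} Σ_{t ∈ ℂ} λ_{p,t}(s)`
(all but finitely many summands vanish). -/
def lamTot {n : ℕ} (d : ℕ) (P : MvPolynomial (XS n) ℂ) (s : ℂ) : ℕ :=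
  ∑ᶠ p ∈ Sigset d P s, ∑ᶠ t : ℂ, lamP d P p t s

/-- the chart coordinates of the affine point `[x : 1] ∈ ℙⁿ` in the chart `x_j = 1`,
the slot `j` carrying the coordinate `x₀` (i.e. `1/x_j`). -/
def chartCo {n : ℕ} (j : Fin n) (x : Fin n → ℂ) : Fin n → ℂ :=
  fun i => if i = j then 1 / x j else x i / x j

/-- the affine discriminant `Δ_P ⊂ ℂ_s × ℂ_t`: the closure of the set of pairs
`(s, f_s(x))` over the affine critical points `x` of `f_s`. -/
def DeltaP {n : ℕ} (P : MvPolynomial (XS n) ℂ) : Set (ℂ × ℂ) :=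
  closure {w : ℂ × ℂ | ∃ x : Fin n → ℂ, CritPt P x w.1 ∧ w.2 = eval (evA x w.1) P}

namespace Stmt0Aux

def rT {n : ℕ} : XS n → TV n := Sum.elim Sum.inl (fun _ => Sum.inr 1)

lemma rT_inj {n : ℕ} : Function.Injective (rT (n := n)) := by
  rintro (a | a) (b | b) h <;> simp [rT] at h <;> simp [h]

lemma aeval_embT_eq {n : ℕ} (g : MvPolynomial (XS n) ℂ) :
    aeval embT g = rename (rT (n := n)) g := by
  have h : embT (n := n) = X ∘ rT := by
    funext v; rcases v with i | u <;> rfl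
  rw [h, rename_eq_aeval]

lemma pderiv_rename_zero {n : ℕ} (v : TV n) (hv : ∀ w : XS n, rT w ≠ v)
    (p : MvPolynomial (XS n) ℂ) : pderiv v (rename (rT (n := n)) p) = 0 := by
  induction p using MvPolynomial.induction_on with
  | C a => simp
  | add p q hp hq => simp [hp, hq]
  | mul_X p j hp => simp [pderiv_mul, hp, pderiv_X_of_ne (hv j)]

@[simp] lemma evT_inl {n : ℕ} (u : HV n → ℂ) (s t : ℂ) (i : Fin n) :
    evT u s t (Sum.inl i) = u (Sum.inl i) := rfl
@[simp] lemma evT_inr0 {n : ℕ} (u : HV n → ℂ) (s t : ℂ) :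
    evT u s t (Sum.inr 0) = u (Sum.inr ()) := rfl
@[simp] lemma evT_inr1 {n : ℕ} (u : HV n → ℂ) (s t : ℂ) :
    evT u s t (Sum.inr 1) = s := rfl
@[simp] lemma evT_inr2 {n : ℕ} (u : HV n → ℂ) (s t : ℂ) :
    evT u s t (Sum.inr 2) = t := rfl

lemma evT_comp_rT {n : ℕ} (u : HV n → ℂ) (s t : ℂ) :
    evT u s t ∘ rT = evA (fun i => u (Sum.inl i)) s := by
  funext v; rcases v with i | u' <;> rfl

end Stmt0Aux

namespace Stmt0Aux

lemma FY_eq {n d : ℕ} (P : MvPolynomial (XS n) ℂ) : FY d P =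
    (∑ q ∈ Finset.range (d+1), (X (Sum.inr 0))^(d-q) * rename (rT (n := n)) (xpart P q))
      - X (Sum.inr 2) * (X (Sum.inr 0))^d := by
  simp only [FY, aeval_embT_eq]

lemma eval_FY {n d : ℕ} (P : MvPolynomial (XS n) ℂ) (u : HV n → ℂ) (s t : ℂ) :
    eval (evT u s t) (FY d P) =
      (∑ q ∈ Finset.range (d+1), (u (Sum.inr ()))^(d-q) *
        eval (evA (fun i => u (Sum.inl i)) s) (xpart P q)) - t * (u (Sum.inr ()))^d := by
  rw [FY_eq]
  simp [eval_rename, evT_comp_rT]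

lemma eval_pderiv_inl {n d : ℕ} (P : MvPolynomial (XS n) ℂ) (u : HV n → ℂ) (s t : ℂ)
    (i : Fin n) :
    eval (evT u s t) (pderiv (Sum.inl i) (FY d P)) =
      ∑ q ∈ Finset.range (d+1), (u (Sum.inr ()))^(d-q) *
        eval (evA (fun i => u (Sum.inl i)) s) (pderiv (Sum.inl i) (xpart P q)) := by
  rw [FY_eq, map_sub, map_sum]
  have hren : ∀ q, pderiv (Sum.inl i : TV n) (rename (rT (n := n)) (xpart P q))
      = rename (rT (n := n)) (pderiv (Sum.inl i) (xpart P q)) := fun q => by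
    simpa [rT] using pderiv_rename (f := rT (n := n)) rT_inj (Sum.inl i) (xpart P q)
  simp [pderiv_mul, pderiv_pow, hren, eval_rename, evT_comp_rT]

lemma eval_pderiv_s {n d : ℕ} (P : MvPolynomial (XS n) ℂ) (u : HV n → ℂ) (s t : ℂ) :
    eval (evT u s t) (pderiv (Sum.inr 1) (FY d P)) =
      ∑ q ∈ Finset.range (d+1), (u (Sum.inr ()))^(d-q) *
        eval (evA (fun i => u (Sum.inl i)) s) (pderiv (Sum.inr ()) (xpart P q)) := by
  rw [FY_eq, map_sub, map_sum]
  have hren : ∀ q, pderiv (Sum.inr 1 : TV n) (rename (rT (n := n)) (xpart P q))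
      = rename (rT (n := n)) (pderiv (Sum.inr ()) (xpart P q)) := fun q => by
    simpa [rT] using pderiv_rename (f := rT (n := n)) rT_inj (Sum.inr ()) (xpart P q)
  simp [pderiv_mul, pderiv_pow, hren, eval_rename, evT_comp_rT]

lemma eval_pderiv_t {n d : ℕ} (P : MvPolynomial (XS n) ℂ) (u : HV n → ℂ) (s t : ℂ) :
    eval (evT u s t) (pderiv (Sum.inr 2) (FY d P)) = -(u (Sum.inr ()))^d := by
  rw [FY_eq, map_sub, map_sum]
  have hren : ∀ q, pderiv (Sum.inr 2 : TV n) (rename (rT (n := n)) (xpart P q)) = 0 :=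
    fun q => pderiv_rename_zero _ (by rintro (w | w) <;> simp [rT]) _
  simp [pderiv_mul, pderiv_pow, hren]

lemma eval_pderiv_x0 {n d : ℕ} (P : MvPolynomial (XS n) ℂ) (u : HV n → ℂ) (s t : ℂ) :
    eval (evT u s t) (pderiv (Sum.inr 0) (FY d P)) =
      (∑ q ∈ Finset.range (d+1), (d - q : ℕ) * (u (Sum.inr ()))^(d-q-1) *
        eval (evA (fun i => u (Sum.inl i)) s) (xpart P q))
      - t * (d * (u (Sum.inr ()))^(d-1)) := by
  rw [FY_eq, map_sub, map_sum]
  have hren : ∀ q, pderiv (Sum.inr 0 : TV n) (rename (rT (n := n)) (xpart P q)) = 0 :=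
    fun q => pderiv_rename_zero _ (by rintro (w | w) <;> simp [rT]) _
  simp [pderiv_mul, pderiv_pow, hren, eval_rename, evT_comp_rT]
  congr 1
  · exact funext fun q => by ring

end Stmt0Aux

namespace Stmt0Aux

lemma euler {n d : ℕ} (P : MvPolynomial (XS n) ℂ) :
    ∑ i : Fin n, X (Sum.inl i) * pderiv (Sum.inl i) (xpart P d) = d • xpart P d := by
  have hh : (xpart P d).IsWeightedHomogeneous (wtx n) d :=
    weightedHomogeneousComponent_isWeightedHomogeneous d P
  set p := xpart P d with hp
  conv_lhs => rw [p.as_sum]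
  conv_rhs => rw [p.as_sum]
  rw [Finset.smul_sum]
  simp_rw [map_sum, Finset.mul_sum]
  rw [Finset.sum_comm]
  refine Finset.sum_congr rfl fun μ hμ => ?_
  have hw : (Finsupp.weight (wtx n)) μ = d := hh (mem_support_iff.mp hμ)
  have hterm : ∀ i : Fin n, (X (Sum.inl i) : MvPolynomial (XS n) ℂ) *
      pderiv (Sum.inl i) (monomial μ (coeff μ p)) = μ (Sum.inl i) • monomial μ (coeff μ p) := by
    intro i
    rw [pderiv_monomial]
    by_cases h : μ (Sum.inl i) = 0
    · simp [h]
    · rw [X, monomial_mul, one_mul, smul_monomial]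
      congr 1
      · rw [add_comm, tsub_add_cancel_of_le (Finsupp.single_le_iff.mpr (Nat.one_le_iff_ne_zero.mpr h))]
      · rw [nsmul_eq_mul]; ring
  rw [Finset.sum_congr rfl fun i _ => hterm i, ← Finset.sum_smul]
  congr 1
  rw [← hw, Finsupp.weight_apply, Finsupp.sum_fintype _ _ (by simp), Fintype.sum_sum_type]
  simp [wtx]

lemma eval_xpart_of_derivs {n d : ℕ} (hd : d ≠ 0) (P : MvPolynomial (XS n) ℂ)
    (x : Fin n → ℂ) (s : ℂ)
    (h : ∀ i, eval (evA x s) (pderiv (Sum.inl i) (xpart P d)) = 0) :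
    eval (evA x s) (xpart P d) = 0 := by
  have h2 := congrArg (eval (evA x s)) (euler (d := d) P)
  simp only [map_sum, map_mul, h, mul_zero, Finset.sum_const_zero, smul_eq_mul,
    map_nsmul, nsmul_eq_mul] at h2
  have hd' : (d : ℂ) ≠ 0 := Nat.cast_ne_zero.mpr hd
  simp only [map_natCast] at h2
  exact (mul_eq_zero.mp h2.symm).resolve_left hd'

end Stmt0Aux

namespace Stmt0Aux

lemma sum_collapse {d : ℕ} (c : ℕ → ℂ) :
    ∑ q ∈ Finset.range (d+1), (0:ℂ)^(d-q) * c q = c d := by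
  rw [Finset.sum_eq_single d]
  · simp
  · intro q hq hne
    rw [zero_pow (Nat.sub_ne_zero_of_lt
      (lt_of_le_of_ne (Nat.lt_succ_iff.mp (Finset.mem_range.mp hq)) hne)), zero_mul]
  · intro h; exact absurd (Finset.self_mem_range_succ d) h

lemma sum_collapse' {d : ℕ} (hd : 2 ≤ d) (c : ℕ → ℂ) :
    ∑ q ∈ Finset.range (d+1), ((d - q : ℕ):ℂ) * (0:ℂ)^(d-q-1) * c q = c (d-1) := by
  rw [Finset.sum_eq_single (d-1)]
  · have h1 : d - (d-1) = 1 := by omega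
    simp [h1]
  · intro q hq hne
    rcases Nat.lt_or_ge q (d-1) with h | h
    · rw [zero_pow (by omega), mul_zero, zero_mul]
    · have hq' : q = d := by have := Finset.mem_range.mp hq; omega
      subst hq'; simp
  · intro h; exact absurd (Finset.mem_range.mpr (by omega)) h

end Stmt0Aux


open Stmt0Aux in
/-- For a one-parameter family `P(x,s)` of degree-`d` polynomials
(`d ≥ 2`), the singular locus of `Y ⊂ ℙⁿ × ℂ_s × ℂ_t` is exactly
`{([x:0], s, t) : ∂P_d/∂x_i(x,s) = 0 ∀i, P_{d-1}(x,s) = 0, ∂P_d/∂s(x,s) = 0, t ∈ ℂ}`. -/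
theorem stmt0 {n d : ℕ} (hn : 2 ≤ n) (hd : 2 ≤ d) (P : MvPolynomial (XS n) ℂ)
    (hdeg : ∀ s : ℂ, DegXAt d P s) :
    ∀ (u : HV n → ℂ), u ≠ 0 → ∀ s t : ℂ,
      (OnY d P u s t ∧ AllDerivsVanish d P u s t) ↔
        (u (Sum.inr ()) = 0 ∧
          (∀ i : Fin n, eval (evA (fun i => u (Sum.inl i)) s)
              (pderiv (Sum.inl i) (xpart P d)) = 0) ∧
          eval (evA (fun i => u (Sum.inl i)) s) (xpart P (d-1)) = 0 ∧
          eval (evA (fun i => u (Sum.inl i)) s)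
              (pderiv (Sum.inr ()) (xpart P d)) = 0) := by
  intro u hu s t
  set x : Fin n → ℂ := fun i => u (Sum.inl i) with hx
  set a : ℂ := u (Sum.inr ()) with ha
  constructor
  · rintro ⟨hOn, hAll⟩
    have ha0 : a = 0 := by
      have h := hAll (Sum.inr 2)
      rw [eval_pderiv_t, neg_eq_zero] at h
      exact pow_eq_zero_iff (by omega) |>.mp h
    refine ⟨ha0, ?_, ?_, ?_⟩
    · intro i
      have h := hAll (Sum.inl i)
      rw [eval_pderiv_inl, ← ha, ha0, sum_collapse] at h
      exact h
    · have h := hAll (Sum.inr 0)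
      rw [eval_pderiv_x0, ← ha, ha0, sum_collapse' hd,
        zero_pow (by omega : d - 1 ≠ 0), mul_zero, mul_zero, sub_zero] at h
      exact h
    · have h := hAll (Sum.inr 1)
      rw [eval_pderiv_s, ← ha, ha0, sum_collapse] at h
      exact h
  · rintro ⟨ha0, h1, h2, h3⟩
    have hPd : eval (evA x s) (xpart P d) = 0 :=
      eval_xpart_of_derivs (by omega) P x s h1
    constructor
    · show eval (evT u s t) (FY d P) = 0
      rw [eval_FY, ← ha, ha0, sum_collapse, zero_pow (by omega : d ≠ 0), mul_zero, sub_zero]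
      exact hPd
    · rintro (i | k)
      · rw [eval_pderiv_inl, ← ha, ha0, sum_collapse]
        exact h1 i
      · fin_cases k
        · show eval (evT u s t) (pderiv (Sum.inr 0) (FY d P)) = 0
          rw [eval_pderiv_x0, ← ha, ha0, sum_collapse' hd,
            zero_pow (by omega : d - 1 ≠ 0), mul_zero, mul_zero, sub_zero]
          exact h2
        · show eval (evT u s t) (pderiv (Sum.inr 1) (FY d P)) = 0
          rw [eval_pderiv_s, ← ha, ha0, sum_collapse]
          exact h3
        · show eval (evT u s t) (pderiv (Sum.inr 2) (FY d P)) = 0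
          rw [eval_pderiv_t, ← ha, ha0, zero_pow (by omega : d ≠ 0), neg_zero]
end
end

section
/- Let P be a one-parameter FISI deformation of f₀, of degree d ≥ 2. Suppose (x_k, s_k) is a sequence in ℂⁿ × ℂ with ∂P/∂x_i(x_k, s_k) = 0 for all i, s_k → 0, |x_k| → ∞, and such that [x_k : 1] converges in ℙⁿ to a point [v : 0] of the hyperplane at infinity. Then ∂P_d/∂x_i(v, 0) = 0 for all i = 1,…,n (i.e. [v] ∈ W₀). If moreover the critical values P(x_k, s_k) converge to some t₀ ∈ ℂ, then in addition P_{d−1}(v, 0) = 0 (i.e. [v] ∈ Σ₀). (In the paper's terms: the type II part of the critical locus satisfies Γ_{II} ∩ {x₀ = 0} ⊂ Σ₀ × {0} × ℂ, and the type III part satisfies Γ_{III} ∩ {x₀ = 0} ⊂ W₀ × {0} × {∞}.) -/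
open MvPolynomial Filter CategoryTheory Limits Topology

noncomputable section

namespace Stmt6Aux

variable {n : ℕ}

lemma weight_eq_sum (μ : XS n →₀ ℕ) :
    (Finsupp.weight (wtx n) μ : ℕ) = ∑ i : Fin n, μ (Sum.inl i) := by
  rw [Finsupp.weight_apply, Finsupp.sum_fintype]
  · rw [Fintype.sum_sum_type]
    simp [wtx]
  · intro j; simp

lemma weight_le_degree (μ : XS n →₀ ℕ) :
    (Finsupp.weight (wtx n) μ : ℕ) ≤ μ.sum fun _ e => e := by
  rw [weight_eq_sum, Finsupp.sum_fintype _ _ (fun _ => rfl), Fintype.sum_sum_type]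
  exact Nat.le_add_right _ _

lemma eval_smul_of_wh {Q : MvPolynomial (XS n) ℂ} {m : ℕ}
    (hQ : Q.IsWeightedHomogeneous (wtx n) m) (c : ℂ) (x : Fin n → ℂ) (s : ℂ) :
    eval (evA (c • x) s) Q = c ^ m * eval (evA x s) Q := by
  conv_lhs => rw [Q.as_sum]
  conv_rhs => rw [Q.as_sum]
  rw [map_sum, map_sum, Finset.mul_sum]
  refine Finset.sum_congr rfl fun μ hμ => ?_
  have hw : (Finsupp.weight (wtx n)) μ = m := hQ (mem_support_iff.mp hμ)
  rw [eval_monomial, eval_monomial]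
  have key : (Finsupp.prod μ fun j e => evA (c • x) s j ^ e)
      = c ^ m * Finsupp.prod μ fun j e => evA x s j ^ e := by
    rw [Finsupp.prod, Finsupp.prod]
    have h1 : ∀ j ∈ μ.support, evA (c • x) s j ^ μ j
        = c ^ (wtx n j * μ j) * evA x s j ^ μ j := by
      intro j _
      cases j with
      | inl i => simp [evA, wtx, mul_pow]
      | inr u => simp [evA, wtx]
    rw [Finset.prod_congr rfl h1, Finset.prod_mul_distrib,
      Finset.prod_pow_eq_pow_sum]
    congr 2
    rw [← hw, Finsupp.weight_apply, Finsupp.sum]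
    exact Finset.sum_congr rfl fun j _ => by simp [mul_comm]
  rw [key]; ring

end Stmt6Aux

namespace Stmt6Aux

variable {n : ℕ}

lemma pderiv_wh {Q : MvPolynomial (XS n) ℂ} {m : ℕ}
    (hQ : Q.IsWeightedHomogeneous (wtx n) m) (i : Fin n) :
    (pderiv (Sum.inl i) Q).IsWeightedHomogeneous (wtx n) (m - 1) := by
  rw [← mem_weightedHomogeneousSubmodule]
  have hrw : pderiv (Sum.inl i) Q
      = ∑ μ ∈ Q.support, pderiv (Sum.inl i) (monomial μ (coeff μ Q)) := by
    conv_lhs => rw [Q.as_sum]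
    rw [map_sum]
  rw [hrw]
  refine Submodule.sum_mem _ fun μ hμ => ?_
  rw [mem_weightedHomogeneousSubmodule, pderiv_monomial]
  by_cases h : μ (Sum.inl i) = 0
  · rw [h]; simp only [Nat.cast_zero, mul_zero, map_zero]
    exact isWeightedHomogeneous_zero ℂ _ _
  · apply isWeightedHomogeneous_monomial
    have hw : (Finsupp.weight (wtx n)) μ = m := hQ (mem_support_iff.mp hμ)
    have hle : Finsupp.single (Sum.inl i) 1 ≤ μ := by
      rw [Finsupp.single_le_iff]; omega
    have h2 : μ - Finsupp.single (Sum.inl i) 1 + Finsupp.single (Sum.inl i) 1 = μ :=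
      tsub_add_cancel_of_le hle
    have h3 := congrArg (Finsupp.weight (wtx n)) h2
    rw [map_add] at h3
    have hws : (Finsupp.weight (wtx n)) (Finsupp.single (Sum.inl i) 1) = 1 := by
      rw [Finsupp.weight_apply, Finsupp.sum_single_index] <;> simp [wtx]
    rw [hws, hw] at h3
    omega

lemma pderiv_wh_zero {Q : MvPolynomial (XS n) ℂ}
    (hQ : Q.IsWeightedHomogeneous (wtx n) 0) (i : Fin n) :
    pderiv (Sum.inl i) Q = 0 := by
  apply pderiv_eq_zero_of_notMem_vars
  rw [mem_vars]
  rintro ⟨μ, hμ, hiμ⟩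
  have hw : (Finsupp.weight (wtx n)) μ = 0 := hQ (mem_support_iff.mp hμ)
  have := Finsupp.le_weight (wtx n) (s := Sum.inl i) (by simp [wtx]) μ
  rw [hw] at this
  simp only [Finsupp.mem_support_iff] at hiμ
  omega

lemma euler_eval {Q : MvPolynomial (XS n) ℂ} {m : ℕ}
    (hQ : Q.IsWeightedHomogeneous (wtx n) m) (x : Fin n → ℂ) (s : ℂ) :
    ∑ i : Fin n, x i * eval (evA x s) (pderiv (Sum.inl i) Q)
      = (m : ℂ) * eval (evA x s) Q := by
  conv_lhs => rw [Q.as_sum]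
  conv_rhs => rw [Q.as_sum]
  simp only [map_sum, Finset.mul_sum]
  rw [Finset.sum_comm]
  refine Finset.sum_congr rfl fun μ hμ => ?_
  have hw : ∑ i : Fin n, μ (Sum.inl i) = m := by
    rw [← weight_eq_sum]; exact hQ (mem_support_iff.mp hμ)
  simp only [pderiv_monomial, eval_monomial]
  have key : ∀ i : Fin n, x i * (coeff μ Q * ↑(μ (Sum.inl i)) *
        ((μ - Finsupp.single (Sum.inl i) 1).prod fun j e => evA x s j ^ e))
      = (μ (Sum.inl i) : ℂ) * (coeff μ Q * μ.prod fun j e => evA x s j ^ e) := by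
    intro i
    by_cases h : μ (Sum.inl i) = 0
    · rw [h]; simp
    · have hle : Finsupp.single (Sum.inl i) 1 ≤ μ := by
        rw [Finsupp.single_le_iff]; omega
      have h2 : μ - Finsupp.single (Sum.inl i) 1 + Finsupp.single (Sum.inl i) 1 = μ :=
        tsub_add_cancel_of_le hle
      have hp : (μ.prod fun j e => evA x s j ^ e)
          = ((μ - Finsupp.single (Sum.inl i) 1).prod fun j e => evA x s j ^ e) * x i := by
        conv_lhs => rw [← h2]
        rw [Finsupp.prod_add_index' (fun j => pow_zero _) (fun j e1 e2 => pow_add _ _ _)]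
        congr 1
        have := Finsupp.prod_single_index (M := ℕ) (N := ℂ) (a := (Sum.inl i : XS n))
          (b := 1) (h := fun j e => evA x s j ^ e) (pow_zero _)
        exact this.trans (pow_one _)
      rw [hp]; ring
  rw [Finset.sum_congr rfl fun i _ => key i, ← Finset.sum_mul]
  congr 1
  rw [← hw]
  push_cast
  rfl

end Stmt6Aux

namespace Stmt6Aux

variable {n : ℕ}

lemma xpart_eq_zero {Q : MvPolynomial (XS n) ℂ} {q : ℕ} (hq : Q.totalDegree < q) :
    xpart Q q = 0 := by
  apply weightedHomogeneousComponent_eq_zero'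
  intro μ hμ
  have h1 := weight_le_degree (n := n) μ
  have h2 := MvPolynomial.le_totalDegree hμ
  omega

lemma sum_xpart (Q : MvPolynomial (XS n) ℂ) {N : ℕ} (hN : Q.totalDegree ≤ N) :
    ∑ q ∈ Finset.range (N + 1), xpart Q q = Q := by
  have hsub : (Function.support fun q => weightedHomogeneousComponent (wtx n) q Q)
      ⊆ ↑(Finset.range (N + 1)) := by
    intro q hq
    simp only [Function.mem_support] at hq
    simp only [Finset.coe_range, Set.mem_Iio]
    by_contra hc
    exact hq (xpart_eq_zero (Q := Q) (q := q) (by omega))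
  calc ∑ q ∈ Finset.range (N + 1), xpart Q q
      = ∑ᶠ q, weightedHomogeneousComponent (wtx n) q Q :=
        (finsum_eq_finset_sum_of_support_subset _ hsub).symm
    _ = Q := finsum_weightedHomogeneousComponent (wtx n) Q

lemma eval_aeval_elim (x : Fin n → ℂ) (s : ℂ) (Q : MvPolynomial (XS n) ℂ) :
    eval x (aeval (Sum.elim X (C ∘ fun _ : Unit => s)) Q) = eval (evA x s) Q := by
  have h := MvPolynomial.aeval_sumElim (R := ℂ) (S := ℂ) (T := ℂ) Q (fun _ : Unit => s) x
  have h2 : (Sum.elim x (algebraMap ℂ ℂ ∘ fun _ : Unit => s)) = evA x s := by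
    funext j; cases j <;> simp [evA]
  rw [h2] at h
  have e1 : ∀ (g : Fin n → ℂ) (p : MvPolynomial (Fin n) ℂ), (aeval g) p = eval g p :=
    fun g p => by rw [← coe_aeval_eq_eval]; rfl
  have e2 : ∀ (g : XS n → ℂ) (p : MvPolynomial (XS n) ℂ), (aeval g) p = eval g p :=
    fun g p => by rw [← coe_aeval_eq_eval]; rfl
  rw [e1, e2] at h
  exact h.symm

lemma high_deriv_zero {P : MvPolynomial (XS n) ℂ} {d : ℕ} {s : ℂ}
    (h : ∀ q, d < q → ∀ x : Fin n → ℂ, eval (evA x s) (xpart P q) = 0)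
    {q : ℕ} (hq : d < q) (i : Fin n) (x : Fin n → ℂ) :
    eval (evA x s) (pderiv (Sum.inl i) (xpart P q)) = 0 := by
  have hz : aeval (Sum.elim X (C ∘ fun _ : Unit => s)) (xpart P q) = 0 := by
    apply MvPolynomial.funext
    intro y
    rw [eval_aeval_elim, h q hq y, map_zero]
  rw [← eval_aeval_elim, aeval_sumElim_pderiv_inl, hz, map_zero, map_zero]

end Stmt6Aux

/-- For a FISI deformation: if a sequence of affine critical points
`(x_k, s_k)` has `s_k → 0`, `|x_k| → ∞` and `[x_k : 1] → [v : 0]` in `ℙⁿ` (the latter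
encoded by scalars `c_k → 0` with `c_k • x_k → v`), then `[v] ∈ W₀`; if moreover the
critical values `P(x_k, s_k)` converge to some finite `t₀` then also `[v] ∈ Σ₀`. -/
theorem stmt6 {n d : ℕ} (hn : 2 ≤ n) (hd : 2 ≤ d) (P : MvPolynomial (XS n) ℂ)
    (hdeg : ∃ ε > (0:ℝ), ∀ s : ℂ, ‖s‖ < ε → DegXAt d P s)
    (hfisi : FISIdef d P)
    (x : ℕ → Fin n → ℂ) (s : ℕ → ℂ)
    (hcrit : ∀ k, CritPt P (x k) (s k))
    (hs : Tendsto s atTop (nhds 0))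
    (hxinf : Tendsto (fun k => ‖x k‖) atTop atTop)
    (v : Fin n → ℂ) (hv : v ≠ 0)
    (c : ℕ → ℂ)
    (hcx : Tendsto (fun k => c k • x k) atTop (nhds v))
    (hc0 : Tendsto c atTop (nhds 0)) :
    WCond d P v 0 ∧
      ∀ t₀ : ℂ, Tendsto (fun k => eval (evA (x k) (s k)) P) atTop (nhds t₀) →
        eval (evA v 0) (xpart P (d-1)) = 0 := by
  classical
  obtain ⟨ε, hε, hdegs⟩ := hdeg
  set N := max P.totalDegree d with hNdef
  have hPsum : ∑ q ∈ Finset.range (N + 1), xpart P q = P :=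
    Stmt6Aux.sum_xpart P (le_max_left _ _)
  have hdN : d ≤ N := le_max_right _ _
  have hsε : ∀ᶠ k in atTop, ‖s k‖ < ε := by
    have h := Metric.tendsto_nhds.mp hs ε hε
    filter_upwards [h] with k hk
    simpa [dist_zero_right] using hk
  have hcne : ∀ᶠ k in atTop, c k ≠ 0 := by
    have hne : ∀ᶠ k in atTop, c k • x k ≠ 0 :=
      hcx (isOpen_compl_singleton.mem_nhds (by simpa using hv))
    filter_upwards [hne] with k hk hk0
    apply hk; rw [hk0, zero_smul]
  have hev : ∀ Q : MvPolynomial (XS n) ℂ,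
      Tendsto (fun k => eval (evA (c k • x k) (s k)) Q) atTop (nhds (eval (evA v 0) Q)) := by
    intro Q
    have h1 : Tendsto (fun k => evA (c k • x k) (s k)) atTop (nhds (evA v 0)) := by
      rw [tendsto_pi_nhds]
      intro j
      cases j with
      | inl i => exact ((continuous_apply i).tendsto v).comp hcx
      | inr u => exact hs
    exact ((MvPolynomial.continuous_eval (p := Q)).tendsto _).comp h1
  have hpow : ∀ e : ℕ, Tendsto (fun k => c k ^ e) atTop
      (nhds (if e = 0 then 1 else 0)) := by
    intro e
    by_cases h : e = 0
    · simp only [h, pow_zero, if_pos rfl]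
      exact tendsto_const_nhds
    · rw [if_neg h]
      simpa [zero_pow h] using hc0.pow e
  constructor
  · intro i
    set D : ℕ → MvPolynomial (XS n) ℂ := fun q => pderiv (Sum.inl i) (xpart P q) with hD
    have hDh : ∀ q, (D q).IsWeightedHomogeneous (wtx n) (q - 1) := fun q =>
      Stmt6Aux.pderiv_wh (weightedHomogeneousComponent_isWeightedHomogeneous q P) i
    have hD0 : D 0 = 0 :=
      Stmt6Aux.pderiv_wh_zero (weightedHomogeneousComponent_isWeightedHomogeneous 0 P) i
    have key : ∀ᶠ k in atTop,
        ∑ q ∈ Finset.range (d + 1), c k ^ (d - q) * eval (evA (c k • x k) (s k)) (D q)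
          = 0 := by
      filter_upwards [hsε, hcne] with k hks hkc
      have hsplit : ∑ q ∈ Finset.range (N + 1), eval (evA (x k) (s k)) (D q) = 0 := by
        have h1 : pderiv (Sum.inl i) P = ∑ q ∈ Finset.range (N + 1), D q := by
          conv_lhs => rw [← hPsum]
          rw [map_sum]
        have h2 := hcrit k i
        rw [h1, map_sum] at h2
        exact h2
      have hdrop : ∑ q ∈ Finset.range (d + 1), eval (evA (x k) (s k)) (D q) = 0 := by
        rw [← hsplit]
        apply Finset.sum_subset (Finset.range_subset_range.mpr (by omega))
        intro q hq1 hq2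
        simp only [Finset.mem_range] at hq1 hq2
        exact Stmt6Aux.high_deriv_zero (hdegs (s k) hks).1 (by omega) i (x k)
      have hterm : ∀ q ∈ Finset.range (d + 1),
          c k ^ (d - q) * eval (evA (c k • x k) (s k)) (D q)
          = c k ^ (d - 1) * eval (evA (x k) (s k)) (D q) := by
        intro q hq
        simp only [Finset.mem_range] at hq
        rcases Nat.eq_zero_or_pos q with rfl | hq1
        · rw [hD0]; simp
        · rw [Stmt6Aux.eval_smul_of_wh (hDh q), ← mul_assoc, ← pow_add]
          congr 2
          omega
      rw [Finset.sum_congr rfl hterm, ← Finset.mul_sum, hdrop, mul_zero]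
    have hlim : Tendsto (fun k => ∑ q ∈ Finset.range (d + 1),
        c k ^ (d - q) * eval (evA (c k • x k) (s k)) (D q)) atTop
        (nhds (∑ q ∈ Finset.range (d + 1),
          (if d - q = 0 then 1 else 0) * eval (evA v 0) (D q))) := by
      apply tendsto_finset_sum
      intro q _
      exact (hpow (d - q)).mul (hev (D q))
    have hzero : Tendsto (fun k => ∑ q ∈ Finset.range (d + 1),
        c k ^ (d - q) * eval (evA (c k • x k) (s k)) (D q)) atTop (nhds 0) :=
      Tendsto.congr' (EventuallyEq.symm key) tendsto_const_nhds
    have hsum : ∑ q ∈ Finset.range (d + 1),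
        (if d - q = 0 then 1 else 0) * eval (evA v 0) (D q) = eval (evA v 0) (D d) := by
      rw [Finset.sum_eq_single d]
      · simp
      · intro q hq hne
        simp only [Finset.mem_range] at hq
        rw [if_neg (by omega), zero_mul]
      · intro h; exact absurd (Finset.self_mem_range_succ d) h
    rw [hsum] at hlim
    exact tendsto_nhds_unique hlim hzero
  · intro t₀ ht
    have hkey : ∀ᶠ k in atTop,
        c k ^ (d - 1) * ((d : ℂ) * eval (evA (x k) (s k)) P)
          = ∑ q ∈ Finset.range (d + 1),
            ((d : ℂ) - q) * (c k ^ (d - 1 - q) * eval (evA (c k • x k) (s k)) (xpart P q)) := by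
      filter_upwards [hsε] with k hks
      have heul : ∑ q ∈ Finset.range (N + 1),
          (q : ℂ) * eval (evA (x k) (s k)) (xpart P q) = 0 := by
        have h1 : ∀ q ∈ Finset.range (N + 1),
            (q : ℂ) * eval (evA (x k) (s k)) (xpart P q)
            = ∑ i : Fin n, x k i * eval (evA (x k) (s k)) (pderiv (Sum.inl i) (xpart P q)) :=
          fun q _ => (Stmt6Aux.euler_eval
            (weightedHomogeneousComponent_isWeightedHomogeneous q P) _ _).symm
        rw [Finset.sum_congr rfl h1, Finset.sum_comm]
        apply Finset.sum_eq_zero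
        intro i _
        rw [← Finset.mul_sum]
        have h2 : ∑ q ∈ Finset.range (N + 1),
            eval (evA (x k) (s k)) (pderiv (Sum.inl i) (xpart P q))
            = eval (evA (x k) (s k)) (pderiv (Sum.inl i) P) := by
          have h3 : pderiv (Sum.inl i) P
              = ∑ q ∈ Finset.range (N + 1), pderiv (Sum.inl i) (xpart P q) := by
            conv_lhs => rw [← hPsum]
            rw [map_sum]
          rw [h3, map_sum]
        rw [h2, hcrit k i, mul_zero]
      have hval : ∑ q ∈ Finset.range (N + 1), eval (evA (x k) (s k)) (xpart P q)
          = eval (evA (x k) (s k)) P := by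
        conv_rhs => rw [← hPsum]
        rw [map_sum]
      have hhigh : ∀ q, d < q → eval (evA (x k) (s k)) (xpart P q) = 0 :=
        fun q hq => (hdegs (s k) hks).1 q hq (x k)
      have heul' : ∑ q ∈ Finset.range (d + 1),
          (q : ℂ) * eval (evA (x k) (s k)) (xpart P q) = 0 := by
        rw [← heul]
        apply Finset.sum_subset (Finset.range_subset_range.mpr (by omega))
        intro q hq1 hq2
        simp only [Finset.mem_range] at hq1 hq2
        rw [hhigh q (by omega), mul_zero]
      have hval' : ∑ q ∈ Finset.range (d + 1), eval (evA (x k) (s k)) (xpart P q)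
          = eval (evA (x k) (s k)) P := by
        rw [← hval]
        apply Finset.sum_subset (Finset.range_subset_range.mpr (by omega))
        intro q hq1 hq2
        simp only [Finset.mem_range] at hq1 hq2
        exact hhigh q (by omega)
      have hdt : (d : ℂ) * eval (evA (x k) (s k)) P
          = ∑ q ∈ Finset.range (d + 1),
            ((d : ℂ) - q) * eval (evA (x k) (s k)) (xpart P q) := by
        calc (d : ℂ) * eval (evA (x k) (s k)) P
            = (d : ℂ) * (∑ q ∈ Finset.range (d + 1), eval (evA (x k) (s k)) (xpart P q))
              - ∑ q ∈ Finset.range (d + 1), (q : ℂ) * eval (evA (x k) (s k)) (xpart P q) := by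
              rw [hval', heul', sub_zero]
          _ = ∑ q ∈ Finset.range (d + 1),
              ((d : ℂ) - q) * eval (evA (x k) (s k)) (xpart P q) := by
              rw [Finset.mul_sum, ← Finset.sum_sub_distrib]
              exact Finset.sum_congr rfl fun q _ => by ring
      have hterm : ∀ q ∈ Finset.range (d + 1),
          ((d : ℂ) - q) * (c k ^ (d - 1) * eval (evA (x k) (s k)) (xpart P q))
          = ((d : ℂ) - q) * (c k ^ (d - 1 - q) * eval (evA (c k • x k) (s k)) (xpart P q)) := by
        intro q hq
        simp only [Finset.mem_range] at hq
        rcases Nat.lt_succ_iff_lt_or_eq.mp hq with hlt | rfl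
        · rw [Stmt6Aux.eval_smul_of_wh
            (show (xpart P q).IsWeightedHomogeneous (wtx n) q from
              weightedHomogeneousComponent_isWeightedHomogeneous q P),
            show c k ^ (d - 1) = c k ^ (d - 1 - q) * c k ^ q from by
              rw [← pow_add]; congr 1; omega]
          ring
        · rw [show ((q : ℂ) - (q : ℕ)) = 0 by push_cast; ring]
          rw [zero_mul, zero_mul]
      calc c k ^ (d - 1) * ((d : ℂ) * eval (evA (x k) (s k)) P)
          = ∑ q ∈ Finset.range (d + 1),
            ((d : ℂ) - q) * (c k ^ (d - 1) * eval (evA (x k) (s k)) (xpart P q)) := by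
            rw [hdt, Finset.mul_sum]
            exact Finset.sum_congr rfl fun q _ => by ring
        _ = _ := Finset.sum_congr rfl hterm
    have hlhs : Tendsto (fun k => c k ^ (d - 1) * ((d : ℂ) * eval (evA (x k) (s k)) P))
        atTop (nhds 0) := by
      have h1 : Tendsto (fun k => c k ^ (d - 1)) atTop (nhds 0) := by
        simpa [zero_pow (show d - 1 ≠ 0 by omega)] using hc0.pow (d - 1)
      simpa using h1.mul (ht.const_mul (d : ℂ))
    have hlim : Tendsto (fun k => ∑ q ∈ Finset.range (d + 1),
        ((d : ℂ) - q) * (c k ^ (d - 1 - q) * eval (evA (c k • x k) (s k)) (xpart P q)))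
        atTop (nhds (∑ q ∈ Finset.range (d + 1),
          ((d : ℂ) - q) * ((if d - 1 - q = 0 then 1 else 0) * eval (evA v 0) (xpart P q)))) := by
      apply tendsto_finset_sum
      intro q _
      exact tendsto_const_nhds.mul ((hpow (d - 1 - q)).mul (hev (xpart P q)))
    have hsum : ∑ q ∈ Finset.range (d + 1),
        ((d : ℂ) - q) * ((if d - 1 - q = 0 then 1 else 0) * eval (evA v 0) (xpart P q))
        = eval (evA v 0) (xpart P (d - 1)) := by
      rw [Finset.sum_eq_single (d - 1)]
      · rw [if_pos (by omega), one_mul,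
          show ((d : ℂ) - ((d - 1 : ℕ) : ℂ)) = 1 by
            push_cast [Nat.cast_sub (show 1 ≤ d by omega)]; ring,
          one_mul]
      · intro q hq hne
        simp only [Finset.mem_range] at hq
        by_cases h2 : d - 1 - q = 0
        · have hqd : q = d := by omega
          subst hqd
          rw [show ((q : ℂ) - (q : ℕ)) = 0 by push_cast; ring, zero_mul]
        · rw [if_neg h2, zero_mul, mul_zero]
      · intro h
        exact absurd (by simp only [Finset.mem_range]; omega) h
    rw [hsum] at hlim
    have hz : Tendsto (fun k => ∑ q ∈ Finset.range (d + 1),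
        ((d : ℂ) - q) * (c k ^ (d - 1 - q) * eval (evA (c k • x k) (s k)) (xpart P q)))
        atTop (nhds 0) := Tendsto.congr' hkey hlhs
    exact tendsto_nhds_unique hlim hz
end
end
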